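/- Let ρ1 and ρ2 be n×n positive definite density matrices with eigenvalues λ_1(ρ1) ≥ … ≥ λ_n(ρ1) and λ_1(ρ2) ≥ … ≥ λ_n(ρ2). Then for every n×n unitary U, Σ_{j=1}^n λ_j(ρ1) log(λ_j(ρ1)/λ_j(ρ2)) ≤ S(ρ1 || Uρ2U†) ≤ Σ_{j=1}^n λ_j(ρ1) log(λ_j(ρ1)/λ_{n−j+1}(ρ2)), and both bounds are attained for suitable unitary matrices U. -/

import Mathlib

open Matrix
open scoped ComplexOrder Classical

/-- The vector of a tuple's entries sorted in decreasing (nonincreasing) order. -/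
noncomputable def sortDec {n : ℕ} (x : Fin n → ℝ) : Fin n → ℝ :=
  fun i => x (Tuple.sort x i.rev)

/-- The eigenvalues of a Hermitian matrix arranged in decreasing order,
`λ(A)`; junk value `0` if `A` is not Hermitian. -/
noncomputable def eigsDec {n : ℕ} (A : Matrix (Fin n) (Fin n) ℂ) : Fin n → ℝ :=
  if hA : A.IsHermitian then sortDec hA.eigenvalues else 0

/-- The eigenvalues of a Hermitian matrix arranged in increasing order. -/
noncomputable def eigsInc {n : ℕ} (A : Matrix (Fin n) (Fin n) ℂ) : Fin n → ℝ :=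
  fun i => eigsDec A i.rev

/-- `Λ↓(A)`: the diagonal matrix of the eigenvalues of `A` in decreasing order. -/
noncomputable def LambdaDown {n : ℕ} (A : Matrix (Fin n) (Fin n) ℂ) :
    Matrix (Fin n) (Fin n) ℂ :=
  Matrix.diagonal fun i => (eigsDec A i : ℂ)

/-- `Λ↑(A)`: the diagonal matrix of the eigenvalues of `A` in increasing order. -/
noncomputable def LambdaUp {n : ℕ} (A : Matrix (Fin n) (Fin n) ℂ) :
    Matrix (Fin n) (Fin n) ℂ :=
  Matrix.diagonal fun i => (eigsInc A i : ℂ)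

/-- `x ≺ y`: the sum of the `k` largest entries of `x` is at most that of `y`
for every `k`, with equality of the total sums. -/
def Majorizes {n : ℕ} (x y : Fin n → ℝ) : Prop :=
  (∀ k : ℕ, ∑ i ∈ Finset.univ.filter (fun i : Fin n => (i : ℕ) < k), sortDec x i ≤
      ∑ i ∈ Finset.univ.filter (fun i : Fin n => (i : ℕ) < k), sortDec y i) ∧
    (∑ i, x i) = ∑ i, y i

/-- A function `d` is Schur-convex if `x ≺ y` implies `d x ≤ d y`. -/
def SchurConvex {n : ℕ} (d : (Fin n → ℝ) → ℝ) : Prop :=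
  ∀ x y : Fin n → ℝ, Majorizes x y → d x ≤ d y

/-- A density matrix: positive semidefinite with trace one. -/
def IsDensityMatrix {n : ℕ} (ρ : Matrix (Fin n) (Fin n) ℂ) : Prop :=
  ρ.PosSemidef ∧ ρ.trace = 1

/-- A quantum channel: completely positive trace preserving map in Kraus form. -/
def IsQuantumChannel {n : ℕ}
    (Φ : Matrix (Fin n) (Fin n) ℂ → Matrix (Fin n) (Fin n) ℂ) : Prop :=
  ∃ (r : ℕ) (F : Fin r → Matrix (Fin n) (Fin n) ℂ),
    (∑ j, (F j)ᴴ * F j) = 1 ∧ ∀ X, Φ X = ∑ j, F j * X * (F j)ᴴ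

/-- A unital quantum channel. -/
def IsUnitalChannel {n : ℕ}
    (Φ : Matrix (Fin n) (Fin n) ℂ → Matrix (Fin n) (Fin n) ℂ) : Prop :=
  IsQuantumChannel Φ ∧ Φ 1 = 1

/-- A mixed unitary channel: a convex combination of unitary conjugations. -/
def IsMixedUnitaryChannel {n : ℕ}
    (Φ : Matrix (Fin n) (Fin n) ℂ → Matrix (Fin n) (Fin n) ℂ) : Prop :=
  ∃ (r : ℕ) (t : Fin r → ℝ) (U : Fin r → Matrix (Fin n) (Fin n) ℂ),
    (∀ j, 0 ≤ t j) ∧ (∑ j, t j) = 1 ∧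
      (∀ j, U j ∈ Matrix.unitaryGroup (Fin n) ℂ) ∧
      ∀ X, Φ X = ∑ j, (t j : ℂ) • (U j * X * (U j)ᴴ)

/-- Functional calculus: `f(A)` for a Hermitian matrix `A`, via the spectral theorem;
junk value `0` if `A` is not Hermitian. -/
noncomputable def matFun {n : ℕ} (f : ℝ → ℝ) (A : Matrix (Fin n) (Fin n) ℂ) :
    Matrix (Fin n) (Fin n) ℂ :=
  if hA : A.IsHermitian then
    (hA.eigenvectorUnitary : Matrix (Fin n) (Fin n) ℂ) *
      Matrix.diagonal (fun i => (f (hA.eigenvalues i) : ℂ)) *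
      (hA.eigenvectorUnitary : Matrix (Fin n) (Fin n) ℂ)ᴴ
  else 0

/-- `|A| = (AᴴA)^{1/2}`. -/
noncomputable def matAbs {n : ℕ} (A : Matrix (Fin n) (Fin n) ℂ) :
    Matrix (Fin n) (Fin n) ℂ :=
  (Matrix.posSemidef_conjTranspose_mul_self A).1.eigenvectorUnitary.1 *
    Matrix.diagonal ((↑) ∘ (Real.sqrt ·) ∘
      (Matrix.posSemidef_conjTranspose_mul_self A).1.eigenvalues) *
    (star (Matrix.posSemidef_conjTranspose_mul_self A).1.eigenvectorUnitary :
      Matrix (Fin n) (Fin n) ℂ)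

/-- `tr|A|`, the sum of the singular values of `A`. -/
noncomputable def traceAbs {n : ℕ} (A : Matrix (Fin n) (Fin n) ℂ) : ℝ :=
  ((matAbs A).trace).re

/-- The singular values of `A` in decreasing order. -/
noncomputable def singVals {n : ℕ} (A : Matrix (Fin n) (Fin n) ℂ) : Fin n → ℝ :=
  eigsDec (matAbs A)

/-- The positive semidefinite square root of a PSD matrix (junk value `0` otherwise). -/
noncomputable def matSqrt {n : ℕ} (A : Matrix (Fin n) (Fin n) ℂ) :
    Matrix (Fin n) (Fin n) ℂ :=
  if hA : A.PosSemidef then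
    hA.1.eigenvectorUnitary.1 * Matrix.diagonal ((↑) ∘ (Real.sqrt ·) ∘ hA.1.eigenvalues) *
      (star hA.1.eigenvectorUnitary : Matrix (Fin n) (Fin n) ℂ)
  else 0

/-- The fidelity `F(ρ,σ) = tr|ρ^{1/2} σ^{1/2}|`. -/
noncomputable def fidelity {n : ℕ} (ρ σ : Matrix (Fin n) (Fin n) ℂ) : ℝ :=
  traceAbs (matSqrt ρ * matSqrt σ)

/-- The relative entropy `S(ρ‖σ) = tr(ρ (log ρ - log σ))`. -/
noncomputable def relEntropy {n : ℕ} (ρ σ : Matrix (Fin n) (Fin n) ℂ) : ℝ :=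
  ((ρ * (matFun Real.log ρ - matFun Real.log σ)).trace).re

/-- The (real) trace of a matrix whose trace is real. -/
noncomputable def trR {n : ℕ} (A : Matrix (Fin n) (Fin n) ℂ) : ℝ := A.trace.re

section Helpers
variable {n : ℕ}

/-- The permutation realizing `sortDec`. -/
noncomputable def decPerm (x : Fin n → ℝ) : Equiv.Perm (Fin n) :=
  (Fin.revPerm).trans (Tuple.sort x)

lemma sortDec_eq_comp (x : Fin n → ℝ) (i : Fin n) : sortDec x i = x (decPerm x i) := rfl

lemma antitone_sortDec (x : Fin n → ℝ) : Antitone (sortDec x) := by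
  intro i j h
  exact Tuple.monotone_sort x (show j.rev ≤ i.rev by simpa [Fin.rev_le_rev] using h)

lemma comp_eq_sortperm_of_monotone (y : Fin n → ℝ) (σ : Equiv.Perm (Fin n))
    (h : Monotone (y ∘ σ)) : ∀ i, y (σ i) = y (Tuple.sort y i) := by
  have h1 : (y ∘ σ) ∘ Tuple.sort (y ∘ σ) = y ∘ Tuple.sort y :=
    Tuple.comp_perm_comp_sort_eq_comp_sort
  have h2 : Tuple.sort (y ∘ σ) = Equiv.refl _ := Tuple.sort_eq_refl_iff_monotone.mpr h
  intro i
  have := congrFun h1 i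
  rw [h2] at this
  simpa using this

lemma sortDec_comp_monotone {g : ℝ → ℝ} (x : Fin n → ℝ)
    (hg : ∀ i j : Fin n, x i ≤ x j → g (x i) ≤ g (x j)) (i : Fin n) :
    sortDec (fun i => g (x i)) i = g (sortDec x i) := by
  have hm : Monotone ((fun i => g (x i)) ∘ (Tuple.sort x)) := fun a b hab =>
    hg _ _ (Tuple.monotone_sort x hab)
  have h := comp_eq_sortperm_of_monotone (fun i => g (x i)) (Tuple.sort x) hm i.rev
  simpa [sortDec] using h.symm

lemma sortDec_comp_antitone {g : ℝ → ℝ} (x : Fin n → ℝ)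
    (hg : ∀ i j : Fin n, x i ≤ x j → g (x j) ≤ g (x i)) (i : Fin n) :
    sortDec (fun i => g (x i)) i = g (sortDec x i.rev) := by
  have hm : Monotone ((fun i => g (x i)) ∘
      ((Fin.revPerm).trans (Tuple.sort x) : Equiv.Perm (Fin n))) := by
    intro a b hab
    exact hg _ _ (Tuple.monotone_sort x (show b.rev ≤ a.rev by simpa [Fin.rev_le_rev] using hab))
  have h := comp_eq_sortperm_of_monotone (fun i => g (x i)) _ hm i.rev
  simp only [Function.comp_apply, Equiv.trans_apply, Fin.revPerm_apply, Fin.rev_rev] at h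
  simpa [sortDec, Fin.rev_rev] using h.symm

lemma monovary_sortDec (a b : Fin n → ℝ) : Monovary (sortDec a) (sortDec b) := by
  intro i j h
  rcases le_or_gt j i with hij | hij
  · exact antitone_sortDec a hij
  · exact absurd (antitone_sortDec b hij.le) (not_le.mpr h)

lemma sum_sortDec (F : ℝ → ℝ) (x : Fin n → ℝ) :
    ∑ i, F (sortDec x i) = ∑ i, F (x i) := by
  simpa [sortDec_eq_comp] using Equiv.sum_comp (decPerm x) (fun i => F (x i))

lemma sum_perm_mul_le (a b : Fin n → ℝ) (σ : Equiv.Perm (Fin n)) :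
    ∑ i, a i * b (σ i) ≤ ∑ k, sortDec a k * sortDec b k := by
  have h1 : ∑ i, a i * b (σ i) =
      ∑ k, sortDec a k * sortDec b (((decPerm a).trans (σ.trans (decPerm b).symm)) k) := by
    rw [← Equiv.sum_comp (decPerm a) (fun i => a i * b (σ i))]
    refine Finset.sum_congr rfl fun k _ => ?_
    simp [sortDec_eq_comp]
  rw [h1]
  exact (monovary_sortDec a b).sum_mul_comp_perm_le_sum_mul

lemma ds_sum_le (a b : Fin n → ℝ) {d : Matrix (Fin n) (Fin n) ℝ}
    (hd : d ∈ doublyStochastic ℝ (Fin n)) :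
    ∑ i, ∑ j, a i * b j * d i j ≤ ∑ k, sortDec a k * sortDec b k := by
  obtain ⟨w, hw0, hw1, hsum⟩ := exists_eq_sum_perm_of_mem_doublyStochastic hd
  have hent : ∀ i j, d i j = ∑ σ : Equiv.Perm (Fin n), w σ * (σ.permMatrix ℝ) i j := by
    intro i j
    rw [← hsum]
    simp [Matrix.sum_apply]
  have hpm : ∀ (σ : Equiv.Perm (Fin n)) i j,
      (σ.permMatrix ℝ) i j = if j = σ i then 1 else 0 := by
    intro σ i j
    simp [Equiv.Perm.permMatrix, PEquiv.toMatrix_apply, Equiv.toPEquiv_apply, eq_comm]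
  have key : ∀ i, ∑ j, a i * b j * d i j = ∑ σ : Equiv.Perm (Fin n), w σ * (a i * b (σ i)) := by
    intro i
    calc ∑ j, a i * b j * d i j
        = ∑ j, ∑ σ : Equiv.Perm (Fin n), if j = σ i then w σ * (a i * b (σ i)) else 0 := by
          refine Finset.sum_congr rfl fun j _ => ?_
          rw [hent, Finset.mul_sum]
          refine Finset.sum_congr rfl fun σ _ => ?_
          rw [hpm]
          by_cases h : j = σ i
          · simp [h]; ring
          · simp [h]
      _ = ∑ σ : Equiv.Perm (Fin n), ∑ j, if j = σ i then w σ * (a i * b (σ i)) else 0 :=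
          Finset.sum_comm
      _ = ∑ σ : Equiv.Perm (Fin n), w σ * (a i * b (σ i)) := by simp
  calc ∑ i, ∑ j, a i * b j * d i j
      = ∑ σ : Equiv.Perm (Fin n), w σ * ∑ i, a i * b (σ i) := by
        rw [Finset.sum_congr rfl (fun i _ => key i), Finset.sum_comm]
        simp [Finset.mul_sum]
    _ ≤ ∑ σ : Equiv.Perm (Fin n), w σ * ∑ k, sortDec a k * sortDec b k := by
        refine Finset.sum_le_sum fun σ _ => mul_le_mul_of_nonneg_left ?_ (hw0 σ)
        exact sum_perm_mul_le a b σ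
    _ = ∑ k, sortDec a k * sortDec b k := by rw [← Finset.sum_mul, hw1, one_mul]

lemma ds_sum_ge (a b : Fin n → ℝ) {d : Matrix (Fin n) (Fin n) ℝ}
    (hd : d ∈ doublyStochastic ℝ (Fin n)) :
    ∑ k, sortDec a k * sortDec b k.rev ≤ ∑ i, ∑ j, a i * b j * d i j := by
  have h := ds_sum_le a (fun j => - (b j)) hd
  have hneg : ∀ k : Fin n, sortDec (fun j => - (b j)) k = - sortDec b k.rev := fun k =>
    sortDec_comp_antitone (g := fun t => -t) b (fun i j hij => neg_le_neg hij) k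
  have h2 : ∑ i, ∑ j, a i * (-(b j)) * d i j = - ∑ i, ∑ j, a i * b j * d i j := by
    rw [← Finset.sum_neg_distrib]
    refine Finset.sum_congr rfl fun i _ => ?_
    rw [← Finset.sum_neg_distrib]
    exact Finset.sum_congr rfl fun j _ => by ring
  have h3 : ∑ k, sortDec a k * sortDec (fun j => - (b j)) k
      = - ∑ k, sortDec a k * sortDec b k.rev := by
    rw [← Finset.sum_neg_distrib]
    refine Finset.sum_congr rfl fun k _ => ?_
    rw [hneg k]; ring
  rw [h2, h3] at h
  linarith

lemma intertwine (f : ℝ → ℝ) (W : Matrix (Fin n) (Fin n) ℂ) (d e : Fin n → ℝ)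
    (h : W * Matrix.diagonal (fun i => (d i : ℂ)) = Matrix.diagonal (fun i => (e i : ℂ)) * W) :
    W * Matrix.diagonal (fun i => (f (d i) : ℂ)) =
      Matrix.diagonal (fun i => (f (e i) : ℂ)) * W := by
  ext i j
  have h' := congrFun (congrFun (congrArg (fun M => (M : Matrix (Fin n) (Fin n) ℂ)) h) i) j
  simp only [Matrix.mul_diagonal, Matrix.diagonal_mul] at h' ⊢
  by_cases hw : W i j = 0
  · simp [hw]
  · have hde : (d j : ℂ) = (e i : ℂ) := by
      have := h'
      rw [mul_comm ((e i : ℂ)) (W i j)] at this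
      exact mul_left_cancel₀ hw this
    have : d j = e i := by exact_mod_cast hde
    rw [this, mul_comm]

lemma diag_real_herm (μ : Fin n → ℝ) :
    (Matrix.diagonal (fun i => (μ i : ℂ)))ᴴ = Matrix.diagonal (fun i => (μ i : ℂ)) := by
  ext i j
  rw [Matrix.conjTranspose_apply]
  by_cases h : i = j
  · subst h; simp [Complex.conj_ofReal]
  · simp [Matrix.diagonal_apply_ne _ h, Matrix.diagonal_apply_ne _ (Ne.symm h)]

lemma spectral_theorem' {A : Matrix (Fin n) (Fin n) ℂ} (hA : A.IsHermitian) :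
    A = (hA.eigenvectorUnitary : Matrix (Fin n) (Fin n) ℂ) *
        Matrix.diagonal (fun i => (hA.eigenvalues i : ℂ)) *
        (hA.eigenvectorUnitary : Matrix (Fin n) (Fin n) ℂ)ᴴ := by
  have := hA.spectral_theorem
  rw [Unitary.conjStarAlgAut_apply] at this
  rw [← Matrix.star_eq_conjTranspose]
  exact this

lemma matFun_decomp (f : ℝ → ℝ) (A V : Matrix (Fin n) (Fin n) ℂ)
    (hV : V ∈ Matrix.unitaryGroup (Fin n) ℂ) (μ : Fin n → ℝ)
    (hA : A = V * Matrix.diagonal (fun i => (μ i : ℂ)) * Vᴴ) :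
    matFun f A = V * Matrix.diagonal (fun i => (f (μ i) : ℂ)) * Vᴴ := by
  have hVV : Vᴴ * V = 1 := by
    have := Matrix.mem_unitaryGroup_iff'.mp hV
    rwa [Matrix.star_eq_conjTranspose] at this
  have hVV' : V * Vᴴ = 1 := by
    have := Matrix.mem_unitaryGroup_iff.mp hV
    rwa [Matrix.star_eq_conjTranspose] at this
  have hherm : A.IsHermitian := by
    show Aᴴ = A
    rw [hA]
    simp only [Matrix.conjTranspose_mul, Matrix.conjTranspose_conjTranspose, diag_real_herm]
    rw [Matrix.mul_assoc]
  set V₀ := (hherm.eigenvectorUnitary : Matrix (Fin n) (Fin n) ℂ) with hV₀def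
  have hV₀ : V₀ ∈ Matrix.unitaryGroup (Fin n) ℂ := hherm.eigenvectorUnitary.2
  have hV₀V₀ : V₀ᴴ * V₀ = 1 := by
    have := Matrix.mem_unitaryGroup_iff'.mp hV₀
    rwa [Matrix.star_eq_conjTranspose] at this
  have hV₀V₀' : V₀ * V₀ᴴ = 1 := by
    have := Matrix.mem_unitaryGroup_iff.mp hV₀
    rwa [Matrix.star_eq_conjTranspose] at this
  have hspec : A = V₀ * Matrix.diagonal (fun i => (hherm.eigenvalues i : ℂ)) * V₀ᴴ :=
    spectral_theorem' hherm
  set W := V₀ᴴ * V with hWdef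
  have hW : W * Matrix.diagonal (fun i => (μ i : ℂ)) =
      Matrix.diagonal (fun i => (hherm.eigenvalues i : ℂ)) * W := by
    have h1 : V₀ᴴ * A * V = W * Matrix.diagonal (fun i => (μ i : ℂ)) := by
      rw [hA]
      calc V₀ᴴ * (V * Matrix.diagonal (fun i => (μ i : ℂ)) * Vᴴ) * V
          = V₀ᴴ * V * Matrix.diagonal (fun i => (μ i : ℂ)) * (Vᴴ * V) := by
            simp only [Matrix.mul_assoc]
        _ = W * Matrix.diagonal (fun i => (μ i : ℂ)) := by
            rw [hVV, Matrix.mul_one, hWdef, Matrix.mul_assoc]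
    have h2 : V₀ᴴ * A * V = Matrix.diagonal (fun i => (hherm.eigenvalues i : ℂ)) * W := by
      conv_lhs => rw [hspec]
      calc V₀ᴴ * (V₀ * Matrix.diagonal (fun i => (hherm.eigenvalues i : ℂ)) * V₀ᴴ) * V
          = (V₀ᴴ * V₀) * Matrix.diagonal (fun i => (hherm.eigenvalues i : ℂ)) * (V₀ᴴ * V) := by
            simp only [Matrix.mul_assoc]
        _ = Matrix.diagonal (fun i => (hherm.eigenvalues i : ℂ)) * W := by
            rw [hV₀V₀, Matrix.one_mul, hWdef]
    rw [← h1, h2]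
  have hWf := intertwine f W μ hherm.eigenvalues hW
  have hgoal : matFun f A =
      V₀ * Matrix.diagonal (fun i => (f (hherm.eigenvalues i) : ℂ)) * V₀ᴴ := by
    rw [matFun, dif_pos hherm]
  rw [hgoal]
  have hWH : Wᴴ = Vᴴ * V₀ := by
    rw [hWdef, Matrix.conjTranspose_mul, Matrix.conjTranspose_conjTranspose]
  have key : Matrix.diagonal (fun i => (f (hherm.eigenvalues i) : ℂ)) =
      W * Matrix.diagonal (fun i => (f (μ i) : ℂ)) * Wᴴ := by
    rw [hWf, hWH, hWdef]
    symm
    calc Matrix.diagonal (fun i => (f (hherm.eigenvalues i) : ℂ)) * (V₀ᴴ * V) * (Vᴴ * V₀)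
        = Matrix.diagonal (fun i => (f (hherm.eigenvalues i) : ℂ)) * V₀ᴴ * (V * Vᴴ) * V₀ := by
          simp only [Matrix.mul_assoc]
      _ = Matrix.diagonal (fun i => (f (hherm.eigenvalues i) : ℂ)) * (V₀ᴴ * V₀) := by
          rw [hVV']
          simp only [Matrix.mul_one, Matrix.mul_assoc]
      _ = _ := by rw [hV₀V₀, Matrix.mul_one]
  rw [key, hWdef, hWH]
  calc V₀ * (V₀ᴴ * V * Matrix.diagonal (fun i => (f (μ i) : ℂ)) * (Vᴴ * V₀)) * V₀ᴴ
      = (V₀ * V₀ᴴ) * V * Matrix.diagonal (fun i => (f (μ i) : ℂ)) * Vᴴ * (V₀ * V₀ᴴ) := by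
        simp only [Matrix.mul_assoc]
    _ = V * Matrix.diagonal (fun i => (f (μ i) : ℂ)) * Vᴴ := by
        rw [hV₀V₀']
        simp only [Matrix.one_mul, Matrix.mul_one]

lemma norm_sq_eq (z : ℂ) : z * star z = ((‖z‖^2 : ℝ) : ℂ) := by
  rw [show z * star z = z * (starRingEnd ℂ) z from rfl, Complex.mul_conj]
  norm_cast
  rw [Complex.normSq_eq_norm_sq]

lemma trace_conj_pair (Va Vb : Matrix (Fin n) (Fin n) ℂ) (α β : Fin n → ℝ) :
    ((Va * Matrix.diagonal (fun i => (α i : ℂ)) * Vaᴴ) *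
      (Vb * Matrix.diagonal (fun i => (β i : ℂ)) * Vbᴴ)).trace.re
      = ∑ i, ∑ j, α i * β j * ‖(Vaᴴ * Vb) i j‖^2 := by
  set X := Vaᴴ * Vb with hX
  have h1 : (Va * Matrix.diagonal (fun i => (α i : ℂ)) * Vaᴴ) *
      (Vb * Matrix.diagonal (fun i => (β i : ℂ)) * Vbᴴ)
      = Va * (Matrix.diagonal (fun i => (α i : ℂ)) * Vaᴴ * Vb *
          Matrix.diagonal (fun i => (β i : ℂ)) * Vbᴴ) := by
    simp only [Matrix.mul_assoc]
  have h2 : (Matrix.diagonal (fun i => (α i : ℂ)) * Vaᴴ * Vb *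
      Matrix.diagonal (fun i => (β i : ℂ)) * Vbᴴ) * Va
      = Matrix.diagonal (fun i => (α i : ℂ)) *
        (X * Matrix.diagonal (fun i => (β i : ℂ)) * Xᴴ) := by
    rw [hX, Matrix.conjTranspose_mul, Matrix.conjTranspose_conjTranspose]
    simp only [Matrix.mul_assoc]
  rw [h1, Matrix.trace_mul_comm, h2]
  have h3 : (Matrix.diagonal (fun i => (α i : ℂ)) *
      (X * Matrix.diagonal (fun i => (β i : ℂ)) * Xᴴ)).trace
      = ((∑ i, ∑ j, α i * β j * ‖X i j‖^2 : ℝ) : ℂ) := by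
    rw [Matrix.trace]
    push_cast
    refine Finset.sum_congr rfl fun i _ => ?_
    rw [Matrix.diag_apply, Matrix.diagonal_mul, Matrix.mul_apply, Finset.mul_sum]
    refine Finset.sum_congr rfl fun j _ => ?_
    rw [Matrix.mul_diagonal, Matrix.conjTranspose_apply]
    have hz := norm_sq_eq (X i j)
    push_cast at hz
    linear_combination ((α i : ℂ) * (β j : ℂ)) * hz
  rw [h3, Complex.ofReal_re]

lemma unitary_ds {X : Matrix (Fin n) (Fin n) ℂ} (hX : X ∈ Matrix.unitaryGroup (Fin n) ℂ) :
    (Matrix.of fun i j => ‖X i j‖^2) ∈ doublyStochastic ℝ (Fin n) := by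
  have h1 : X * Xᴴ = 1 := by
    have := Matrix.mem_unitaryGroup_iff.mp hX; rwa [Matrix.star_eq_conjTranspose] at this
  have h2 : Xᴴ * X = 1 := by
    have := Matrix.mem_unitaryGroup_iff'.mp hX; rwa [Matrix.star_eq_conjTranspose] at this
  rw [mem_doublyStochastic_iff_sum]
  refine ⟨fun i j => sq_nonneg _, fun i => ?_, fun j => ?_⟩
  · have h : (X * Xᴴ) i i = (1 : Matrix (Fin n) (Fin n) ℂ) i i := by rw [h1]
    rw [Matrix.mul_apply, Matrix.one_apply_eq] at h
    rw [Finset.sum_congr rfl fun j _ => (by rw [Matrix.conjTranspose_apply, norm_sq_eq] :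
      X i j * Xᴴ j i = ((‖X i j‖^2 : ℝ) : ℂ))] at h
    exact_mod_cast h
  · have h : (Xᴴ * X) j j = (1 : Matrix (Fin n) (Fin n) ℂ) j j := by rw [h2]
    rw [Matrix.mul_apply, Matrix.one_apply_eq] at h
    rw [Finset.sum_congr rfl fun i _ => (by rw [Matrix.conjTranspose_apply, mul_comm,
      norm_sq_eq] : Xᴴ j i * X i j = ((‖X i j‖^2 : ℝ) : ℂ))] at h
    exact_mod_cast h

lemma permMatrix_conjTranspose (σ : Equiv.Perm (Fin n)) :
    (σ.permMatrix ℂ)ᴴ = (σ⁻¹).permMatrix ℂ := by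
  ext i j
  rw [Matrix.conjTranspose_apply]
  simp only [Equiv.Perm.permMatrix, PEquiv.toMatrix_apply, Equiv.toPEquiv_apply, Option.mem_def,
    Option.some.injEq]
  by_cases h : σ j = i
  · rw [if_pos h, if_pos (by rw [← h, Equiv.Perm.inv_def, Equiv.symm_apply_apply]), star_one]
  · rw [if_neg h, if_neg (fun hh => h (by rw [← hh, Equiv.Perm.inv_def, Equiv.apply_symm_apply])), star_zero]

lemma permMatrix_mem_unitary (σ : Equiv.Perm (Fin n)) :
    σ.permMatrix ℂ ∈ Matrix.unitaryGroup (Fin n) ℂ := by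
  rw [Matrix.mem_unitaryGroup_iff, Matrix.star_eq_conjTranspose, permMatrix_conjTranspose]
  show σ.toPEquiv.toMatrix * (σ⁻¹).toPEquiv.toMatrix = 1
  rw [PEquiv.toMatrix_toPEquiv_mul]
  ext i j
  rw [Matrix.submatrix_apply]
  simp only [PEquiv.toMatrix_apply, Equiv.toPEquiv_apply, Option.mem_def, Option.some.injEq,
    Matrix.one_apply, id_eq]
  by_cases h : i = j
  · rw [if_pos (by rw [h, Equiv.Perm.inv_def, Equiv.symm_apply_apply]), if_pos h]
  · rw [if_neg (by simpa using h), if_neg h]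

lemma perm_conj_diag (σ : Equiv.Perm (Fin n)) (d : Fin n → ℂ) :
    (σ.permMatrix ℂ) * Matrix.diagonal d * (σ.permMatrix ℂ)ᴴ = Matrix.diagonal (d ∘ σ) := by
  rw [permMatrix_conjTranspose]
  show σ.toPEquiv.toMatrix * Matrix.diagonal d * (σ⁻¹).toPEquiv.toMatrix = _
  rw [PEquiv.toMatrix_toPEquiv_mul, PEquiv.mul_toMatrix_toPEquiv]
  ext i j
  rw [Matrix.submatrix_apply, Matrix.submatrix_apply]
  simp only [id_eq]
  show Matrix.diagonal d (σ i) (σ j) = _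
  by_cases h : i = j
  · subst h; simp [Matrix.diagonal_apply_eq]
  · rw [Matrix.diagonal_apply_ne _ (fun hh => h (Equiv.injective σ hh)),
      Matrix.diagonal_apply_ne _ h]

lemma sum_norm_one (α β : Fin n → ℝ) :
    ∑ i, ∑ j, α i * β j * ‖(1 : Matrix (Fin n) (Fin n) ℂ) i j‖^2 = ∑ i, α i * β i := by
  refine Finset.sum_congr rfl fun i _ => ?_
  rw [Finset.sum_eq_single i]
  · simp
  · intro j _ hji
    simp [Matrix.one_apply_ne' hji]
  · simp

end Helpers

/-- Relative-entropy bounds over unitary conjugations, for positive definite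
density matrices:
`Σ λ_j(ρ1) log(λ_j(ρ1)/λ_j(ρ2)) ≤ S(ρ1‖U ρ2 Uᴴ) ≤ Σ λ_j(ρ1) log(λ_j(ρ1)/λ_{n-j+1}(ρ2))`,
and both bounds are attained. -/
theorem stmt_11 {n : ℕ} (ρ1 ρ2 : Matrix (Fin n) (Fin n) ℂ)
    (h1 : IsDensityMatrix ρ1) (h2 : IsDensityMatrix ρ2)
    (h1' : ρ1.PosDef) (h2' : ρ2.PosDef) :
    (∀ U ∈ Matrix.unitaryGroup (Fin n) ℂ,
        (∑ j, eigsDec ρ1 j * Real.log (eigsDec ρ1 j / eigsDec ρ2 j)) ≤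
            relEntropy ρ1 (U * ρ2 * Uᴴ) ∧
          relEntropy ρ1 (U * ρ2 * Uᴴ) ≤
            ∑ j, eigsDec ρ1 j * Real.log (eigsDec ρ1 j / eigsDec ρ2 j.rev)) ∧
      (∃ U ∈ Matrix.unitaryGroup (Fin n) ℂ,
          relEntropy ρ1 (U * ρ2 * Uᴴ) =
            ∑ j, eigsDec ρ1 j * Real.log (eigsDec ρ1 j / eigsDec ρ2 j)) ∧
      ∃ U ∈ Matrix.unitaryGroup (Fin n) ℂ,
        relEntropy ρ1 (U * ρ2 * Uᴴ) =
          ∑ j, eigsDec ρ1 j * Real.log (eigsDec ρ1 j / eigsDec ρ2 j.rev) := by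
  classical
  have hA1 : ρ1.IsHermitian := h1'.1
  have hA2 : ρ2.IsHermitian := h2'.1
  set α : Fin n → ℝ := hA1.eigenvalues with hαdef
  set μ : Fin n → ℝ := hA2.eigenvalues with hμdef
  have hαpos : ∀ i, 0 < α i := fun i => h1'.eigenvalues_pos i
  have hμpos : ∀ i, 0 < μ i := fun i => h2'.eigenvalues_pos i
  set V1 : Matrix (Fin n) (Fin n) ℂ := (hA1.eigenvectorUnitary : Matrix (Fin n) (Fin n) ℂ)
    with hV1def
  set V2 : Matrix (Fin n) (Fin n) ℂ := (hA2.eigenvectorUnitary : Matrix (Fin n) (Fin n) ℂ)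
    with hV2def
  have hV1 : V1 ∈ Matrix.unitaryGroup (Fin n) ℂ := (hA1.eigenvectorUnitary).2
  have hV2 : V2 ∈ Matrix.unitaryGroup (Fin n) ℂ := (hA2.eigenvectorUnitary).2
  have hV1V1 : V1ᴴ * V1 = 1 := by
    have := Matrix.mem_unitaryGroup_iff'.mp hV1; rwa [Matrix.star_eq_conjTranspose] at this
  have hV2V2 : V2ᴴ * V2 = 1 := by
    have := Matrix.mem_unitaryGroup_iff'.mp hV2; rwa [Matrix.star_eq_conjTranspose] at this
  have hρ1 : ρ1 = V1 * Matrix.diagonal (fun i => (α i : ℂ)) * V1ᴴ := spectral_theorem' hA1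
  have hρ2 : ρ2 = V2 * Matrix.diagonal (fun i => (μ i : ℂ)) * V2ᴴ := spectral_theorem' hA2
  have e1 : ∀ j, eigsDec ρ1 j = sortDec α j := by
    intro j; simp only [eigsDec]; rw [dif_pos hA1]
  have e2 : ∀ j, eigsDec ρ2 j = sortDec μ j := by
    intro j; simp only [eigsDec]; rw [dif_pos hA2]
  have hlog1 : matFun Real.log ρ1 = V1 * Matrix.diagonal (fun i => (Real.log (α i) : ℂ)) * V1ᴴ :=
    matFun_decomp Real.log ρ1 V1 hV1 α hρ1
  have hT1 : ((ρ1 * matFun Real.log ρ1).trace).re = ∑ k, sortDec α k * Real.log (sortDec α k) := by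
    rw [hlog1]
    conv_lhs => rw [hρ1]
    rw [trace_conj_pair V1 V1 α (fun i => Real.log (α i)), hV1V1, sum_norm_one]
    exact (sum_sortDec (fun t => t * Real.log t) α).symm
  have hsplit : ∀ σm : Matrix (Fin n) (Fin n) ℂ, relEntropy ρ1 σm =
      ((ρ1 * matFun Real.log ρ1).trace).re - ((ρ1 * matFun Real.log σm).trace).re := by
    intro σm
    simp only [relEntropy]
    rw [Matrix.mul_sub, Matrix.trace_sub, Complex.sub_re]
  have hsortlogμ : ∀ k, sortDec (fun i => Real.log (μ i)) k = Real.log (sortDec μ k) :=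
    fun k => sortDec_comp_monotone μ (fun i j h => Real.log_le_log (hμpos i) h) k
  have hT2 : ∀ U ∈ Matrix.unitaryGroup (Fin n) ℂ,
      ((ρ1 * matFun Real.log (U * ρ2 * Uᴴ)).trace).re
        = ∑ i, ∑ j, α i * Real.log (μ j) * ‖(V1ᴴ * (U * V2)) i j‖^2 := by
    intro U hU
    have hUV2 : U * V2 ∈ Matrix.unitaryGroup (Fin n) ℂ := mul_mem hU hV2
    have hdecomp : U * ρ2 * Uᴴ = (U * V2) * Matrix.diagonal (fun i => (μ i : ℂ)) * (U * V2)ᴴ := by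
      conv_lhs => rw [hρ2]
      rw [Matrix.conjTranspose_mul]
      simp only [Matrix.mul_assoc]
    rw [matFun_decomp Real.log _ (U * V2) hUV2 μ hdecomp]
    conv_lhs => rw [hρ1]
    exact trace_conj_pair V1 (U * V2) α (fun i => Real.log (μ i))
  have hspos1 : ∀ k, 0 < sortDec α k := fun k => hαpos _
  have hspos2 : ∀ k, 0 < sortDec μ k := fun k => hμpos _
  have htargetL : ∑ j, eigsDec ρ1 j * Real.log (eigsDec ρ1 j / eigsDec ρ2 j)
      = (∑ k, sortDec α k * Real.log (sortDec α k))
        - ∑ k, sortDec α k * Real.log (sortDec μ k) := by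
    rw [← Finset.sum_sub_distrib]
    refine Finset.sum_congr rfl fun k _ => ?_
    rw [e1, e2, Real.log_div (ne_of_gt (hspos1 k)) (ne_of_gt (hspos2 k))]
    ring
  have htargetU : ∑ j, eigsDec ρ1 j * Real.log (eigsDec ρ1 j / eigsDec ρ2 j.rev)
      = (∑ k, sortDec α k * Real.log (sortDec α k))
        - ∑ k, sortDec α k * Real.log (sortDec μ k.rev) := by
    rw [← Finset.sum_sub_distrib]
    refine Finset.sum_congr rfl fun k _ => ?_
    rw [e1, e2, Real.log_div (ne_of_gt (hspos1 k)) (ne_of_gt (hspos2 k.rev))]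
    ring
  have attain : ∀ σp : Equiv.Perm (Fin n),
      ∃ U ∈ Matrix.unitaryGroup (Fin n) ℂ,
        relEntropy ρ1 (U * ρ2 * Uᴴ) =
          (∑ k, sortDec α k * Real.log (sortDec α k)) - ∑ i, α i * Real.log (μ (σp i)) := by
    intro σp
    refine ⟨V1 * (σp.permMatrix ℂ) * V2ᴴ, ?_, ?_⟩
    · exact mul_mem (mul_mem hV1 (permMatrix_mem_unitary σp))
        (by rw [← Matrix.star_eq_conjTranspose]; exact Unitary.star_mem hV2)
    · set U : Matrix (Fin n) (Fin n) ℂ := V1 * (σp.permMatrix ℂ) * V2ᴴ with hUdef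
      have hUH : Uᴴ = V2 * ((σp.permMatrix ℂ)ᴴ * V1ᴴ) := by
        rw [hUdef]
        simp only [Matrix.conjTranspose_mul, Matrix.conjTranspose_conjTranspose,
          Matrix.mul_assoc]
      have hconj : U * ρ2 * Uᴴ = V1 * Matrix.diagonal (fun i => (μ (σp i) : ℂ)) * V1ᴴ := by
        calc U * ρ2 * Uᴴ
            = (V1 * (σp.permMatrix ℂ)) *
                ((V2ᴴ * V2) * Matrix.diagonal (fun i => (μ i : ℂ)) * (V2ᴴ * V2)) *
                ((σp.permMatrix ℂ)ᴴ * V1ᴴ) := by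
              rw [hUdef, hρ2, hUH]
              simp only [Matrix.mul_assoc]
          _ = (V1 * (σp.permMatrix ℂ)) * Matrix.diagonal (fun i => (μ i : ℂ)) *
                ((σp.permMatrix ℂ)ᴴ * V1ᴴ) := by
              rw [hV2V2, Matrix.one_mul, Matrix.mul_one]
          _ = V1 * ((σp.permMatrix ℂ) * Matrix.diagonal (fun i => (μ i : ℂ)) *
                (σp.permMatrix ℂ)ᴴ) * V1ᴴ := by
              simp only [Matrix.mul_assoc]
          _ = V1 * Matrix.diagonal (fun i => (μ (σp i) : ℂ)) * V1ᴴ := by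
              rw [perm_conj_diag]
              rfl
      have hmf : matFun Real.log (U * ρ2 * Uᴴ)
          = V1 * Matrix.diagonal (fun i => (Real.log (μ (σp i)) : ℂ)) * V1ᴴ :=
        matFun_decomp Real.log _ V1 hV1 (fun i => μ (σp i)) hconj
      rw [hsplit, hT1, hmf]
      congr 1
      conv_lhs => rw [hρ1]
      rw [trace_conj_pair V1 V1 α (fun i => Real.log (μ (σp i))), hV1V1, sum_norm_one]
  refine ⟨?_, ?_, ?_⟩
  · intro U hU
    have hX : V1ᴴ * (U * V2) ∈ Matrix.unitaryGroup (Fin n) ℂ := by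
      refine mul_mem ?_ (mul_mem hU hV2)
      rw [← Matrix.star_eq_conjTranspose]
      exact Unitary.star_mem hV1
    have hds := unitary_ds hX
    have hub := ds_sum_le α (fun i => Real.log (μ i)) hds
    have hlb := ds_sum_ge α (fun i => Real.log (μ i)) hds
    simp only [Matrix.of_apply] at hub hlb
    have hrel : relEntropy ρ1 (U * ρ2 * Uᴴ) =
        (∑ k, sortDec α k * Real.log (sortDec α k))
          - ∑ i, ∑ j, α i * Real.log (μ j) * ‖(V1ᴴ * (U * V2)) i j‖^2 := by
      rw [hsplit, hT1, hT2 U hU]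
    constructor
    · rw [hrel, htargetL]
      have hub' : ∑ i, ∑ j, α i * Real.log (μ j) * ‖(V1ᴴ * (U * V2)) i j‖ ^ 2
          ≤ ∑ k, sortDec α k * Real.log (sortDec μ k) :=
        hub.trans_eq (Finset.sum_congr rfl fun k _ => by rw [hsortlogμ k])
      linarith
    · rw [hrel, htargetU]
      have hlb' : ∑ k, sortDec α k * Real.log (sortDec μ k.rev)
          ≤ ∑ i, ∑ j, α i * Real.log (μ j) * ‖(V1ᴴ * (U * V2)) i j‖ ^ 2 :=
        le_trans (le_of_eq (Finset.sum_congr rfl fun k _ => by rw [hsortlogμ k.rev]).symm) hlb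
      linarith
  · obtain ⟨U, hU, hval⟩ := attain ((decPerm α).symm.trans (decPerm μ))
    refine ⟨U, hU, ?_⟩
    rw [hval, htargetL]
    congr 1
    rw [← Equiv.sum_comp (decPerm α)
      (fun i => α i * Real.log (μ (((decPerm α).symm.trans (decPerm μ)) i)))]
    refine Finset.sum_congr rfl fun k _ => ?_
    simp only [Equiv.trans_apply, Equiv.symm_apply_apply]
    rw [sortDec_eq_comp, sortDec_eq_comp]
  · obtain ⟨U, hU, hval⟩ := attain ((decPerm α).symm.trans (Fin.revPerm.trans (decPerm μ)))
    refine ⟨U, hU, ?_⟩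
    rw [hval, htargetU]
    congr 1
    rw [← Equiv.sum_comp (decPerm α)
      (fun i => α i * Real.log (μ (((decPerm α).symm.trans (Fin.revPerm.trans (decPerm μ))) i)))]
    refine Finset.sum_congr rfl fun k _ => ?_
    simp only [Equiv.trans_apply, Equiv.symm_apply_apply, Fin.revPerm_apply]
    rw [sortDec_eq_comp, sortDec_eq_comp]
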